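/- Let K be a field of characteristic different from 2 and from 3, and let u, v ∈ K with u² + u + 1 ≠ 0. Set w = −27u² − 27u − 7, t = 4w + 1, and y = 4(2v+1)(w−20)/3. Then y² = −(1−t)(27 − t/3) if and only if (u² + u + 1)(v² + v + 1) = 5/9. -/

import Mathlib

/-- Let `K` be a field of characteristic different from 2 and 3, and
`u, v ∈ K` with `u² + u + 1 ≠ 0`.  With `w = −27u² − 27u − 7`, `t = 4w + 1`, and
`y = 4(2v+1)(w−20)/3`, one has `y² = −(1−t)(27 − t/3)` iff
`(u² + u + 1)(v² + v + 1) = 5/9`. -/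
theorem coordinate_change_defining_equation (K : Type*) [Field K]
    (h2 : (2 : K) ≠ 0) (h3 : (3 : K) ≠ 0) (u v : K) (hu : u ^ 2 + u + 1 ≠ 0) :
    (4 * (2 * v + 1) * ((-27 * u ^ 2 - 27 * u - 7) - 20) / 3) ^ 2 =
      -(1 - (4 * (-27 * u ^ 2 - 27 * u - 7) + 1)) *
        (27 - (4 * (-27 * u ^ 2 - 27 * u - 7) + 1) / 3) ↔
    (u ^ 2 + u + 1) * (v ^ 2 + v + 1) = 5 / 9 := by
  have h9 : (9 : K) ≠ 0 := by
    intro h; apply h3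
    have h' : (3 : K) * 3 = 0 := by linear_combination h
    rcases mul_eq_zero.mp h' with h | h <;> exact h
  have h576 : (576 : K) ≠ 0 := by
    intro h
    have h' : (2 : K) ^ 6 * 3 ^ 2 = 0 := by linear_combination h
    rcases mul_eq_zero.mp h' with h' | h'
    · exact h2 (pow_eq_zero_iff (by norm_num)|>.mp h')
    · exact h3 (pow_eq_zero_iff (by norm_num)|>.mp h')
  have hA : (576 : K) * (u ^ 2 + u + 1) ≠ 0 := mul_ne_zero h576 hu
  have h15552 : (15552 : K) * (u ^ 2 + u + 1) ≠ 0 := by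
    apply mul_ne_zero _ hu
    intro h
    have h' : (2 : K) ^ 6 * 3 ^ 5 = 0 := by linear_combination h
    rcases mul_eq_zero.mp h' with h' | h'
    · exact h2 (pow_eq_zero_iff (by norm_num)|>.mp h')
    · exact h3 (pow_eq_zero_iff (by norm_num)|>.mp h')
  constructor
  · intro h
    field_simp at h
    have key : (15552 : K) * (u ^ 2 + u + 1) *
        ((u ^ 2 + u + 1) * (v ^ 2 + v + 1) * 9) =
        (15552 : K) * (u ^ 2 + u + 1) * 5 := by linear_combination 3 * h
    have h' := mul_left_cancel₀ h15552 key
    field_simp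
    linear_combination h'
  · intro h
    field_simp at h ⊢
    linear_combination (5184 * (u ^ 2 + u + 1)) * h
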